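/- Let K ≥ 1 and let X be a configuration with a jammed cluster on the sites k+1,…,k+n. Then (TX)(k) + (TX)(k+1) = X(k+1) + X(k+2) + min(X(k−1)+X(k)−K, 0), and if n ≥ 2 then Σ_{x=k}^{k+n−1} (TX)(x) = Σ_{x=k+1}^{k+n} X(x) + min(X(k−1)+X(k)−K, 0). In particular the number of particles in the jammed cluster cannot increase under the dynamics, and if X(k−1)+X(k) < K it decreases by at least K − X(k−1) − X(k) > 0 after one application of the map T. -/

import Mathlib

/-- A configuration on the `K`-lane road: at most `K` particles per site. -/
def IsConf (K : ℤ) (X : ℤ → ℤ) : Prop := ∀ x, 0 ≤ X x ∧ X x ≤ K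

/-- The traffic map `T`. -/
def Tmap (K : ℤ) (X : ℤ → ℤ) : ℤ → ℤ := fun x =>
  X x + min (X (x - 1)) (K - X x) - min (X x) (K - X (x + 1))

/-- `X` has a jammed cluster on the sites `k+1, …, k+n`: each of these sites is
jammed (`X(x) + X(x+1) > K`) while the sites `k` and `k+n+1` are free. -/
def HasJammedCluster (K : ℤ) (X : ℤ → ℤ) (k n : ℤ) : Prop :=
  (∀ x ∈ Finset.Icc (k + 1) (k + n), K < X x + X (x + 1)) ∧
  X k + X (k + 1) ≤ K ∧ X (k + n + 1) + X (k + n + 2) ≤ K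

/-- The number of particles `m(X,a,b) = Σ_{x=a}^{b} X(x)`. -/
noncomputable def msum (X : ℤ → ℤ) (a b : ℤ) : ℤ := ∑ x ∈ Finset.Icc a b, X x

lemma Icc_insert_top (a b : ℤ) (h : a ≤ b) :
    insert b (Finset.Icc a (b - 1)) = Finset.Icc a b := by
  ext x; simp only [Finset.mem_insert, Finset.mem_Icc]; omega

lemma sum_Icc_top (f : ℤ → ℤ) (a b : ℤ) (h : a ≤ b) :
    ∑ x ∈ Finset.Icc a b, f x = (∑ x ∈ Finset.Icc a (b - 1), f x) + f b := by
  rw [← Icc_insert_top a b h, Finset.sum_insert (by simp)]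
  ring

lemma tele (g : ℤ → ℤ) (a : ℤ) :
    ∀ b, a ≤ b → ∑ x ∈ Finset.Icc a b, (g (x - 1) - g x) = g (a - 1) - g b := by
  refine Int.le_induction ?_ ?_
  · simp
  · intro b hb ih
    rw [sum_Icc_top _ a (b + 1) (by omega)]
    simp only [add_sub_cancel_right]
    rw [ih]; ring

/-- The number of particles in a jammed cluster cannot increase under the
dynamics, and decreases by at least `K - X(k-1) - X(k)` when this quantity is
positive. -/
theorem stmt_8 (K : ℤ) (hK : 1 ≤ K) (X : ℤ → ℤ) (hX : IsConf K X)
    (k n : ℤ) (hn : 1 ≤ n) (hjam : HasJammedCluster K X k n) :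
    Tmap K X k + Tmap K X (k + 1) =
      X (k + 1) + X (k + 2) + min (X (k - 1) + X k - K) 0 ∧
    (2 ≤ n →
      msum (Tmap K X) k (k + n - 1) =
        msum X (k + 1) (k + n) + min (X (k - 1) + X k - K) 0 ∧
      msum (Tmap K X) k (k + n - 1) ≤ msum X (k + 1) (k + n) ∧
      (X (k - 1) + X k < K →
        msum (Tmap K X) k (k + n - 1) ≤
          msum X (k + 1) (k + n) - (K - X (k - 1) - X k))) := by
  obtain ⟨hj, hfree, hfree'⟩ := hjam
  constructor
  · -- first part: pure arithmetic
    have h1 : K < X (k + 1) + X (k + 1 + 1) :=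
      hj (k + 1) (Finset.mem_Icc.mpr ⟨le_refl _, by omega⟩)
    have h2 : X (k + 1) + X (k + 2) = X (k + 1) + X (k + 1 + 1) := by ring_nf
    simp only [Tmap]
    have e1 : k + 1 - 1 = k := by ring
    rw [e1]
    omega
  · intro hn2
    set g : ℤ → ℤ := fun x => min (X x) (K - X (x + 1)) with hg
    have hT : ∀ x, Tmap K X x = X x + (g (x - 1) - g x) := by
      intro x
      simp only [Tmap, hg, sub_add_cancel]
      ring
    have hmain : msum (Tmap K X) k (k + n - 1) =
        msum X (k + 1) (k + n) + min (X (k - 1) + X k - K) 0 := by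
      have hs : msum (Tmap K X) k (k + n - 1) =
          (∑ x ∈ Finset.Icc k (k + n - 1), X x) + (g (k - 1) - g (k + n - 1)) := by
        unfold msum
        calc ∑ x ∈ Finset.Icc k (k + n - 1), Tmap K X x
            = ∑ x ∈ Finset.Icc k (k + n - 1), (X x + (g (x - 1) - g x)) := by
              apply Finset.sum_congr rfl; intro x _; exact hT x
          _ = (∑ x ∈ Finset.Icc k (k + n - 1), X x)
              + ∑ x ∈ Finset.Icc k (k + n - 1), (g (x - 1) - g x) := by
              rw [Finset.sum_add_distrib]
          _ = _ := by rw [tele g k (k + n - 1) (by omega)]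
      -- relate the X-sums
      have hsum1 : ∑ x ∈ Finset.Icc k (k + n), X x
          = (∑ x ∈ Finset.Icc k (k + n - 1), X x) + X (k + n) :=
        sum_Icc_top X k (k + n) (by omega)
      have hsum2 : ∑ x ∈ Finset.Icc k (k + n), X x
          = X k + ∑ x ∈ Finset.Icc (k + 1) (k + n), X x := by
        have hins : Finset.Icc k (k + n) = insert k (Finset.Icc (k + 1) (k + n)) := by
          ext x
          simp only [Finset.mem_insert, Finset.mem_Icc]
          omega
        rw [hins, Finset.sum_insert (by simp)]
      -- evaluate g(k+n-1)
      have hjam' : K < X (k + n - 1) + X (k + n - 1 + 1) :=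
        hj (k + n - 1) (Finset.mem_Icc.mpr ⟨by omega, by omega⟩)
      have hgtop : g (k + n - 1) = K - X (k + n) := by
        simp only [hg]
        have : k + n - 1 + 1 = k + n := by ring
        rw [this] at hjam' ⊢
        omega
      have hgbot : g (k - 1) = min (X (k - 1)) (K - X k) := by
        simp only [hg, sub_add_cancel]
      rw [hs, hgtop, hgbot]
      unfold msum
      omega
    refine ⟨hmain, ?_, ?_⟩
    · rw [hmain]; omega
    · intro hlt; rw [hmain]; omega
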